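/- If Y ⊆ ℝ^n is a nonempty compact set such that a closed ball of radius R > 0 rolls freely inside Y (i.e., for every y ∈ ∂Y there exists a with y ∈ B(a, R) ⊆ Y), then a closed ball of radius R rolls freely inside the convex hull of Y: for every y ∈ ∂hull(Y) there exists b with y ∈ B(b, R) ⊆ hull(Y). -/

import Mathlib

open Metric Module

lemma sum_eq_sum_embedding {ι κ : Type*} [Fintype ι] [Fintype κ] {M : Type*}
    [AddCommMonoid M] (e : ι ↪ κ) (g : κ → M) [DecidableEq κ]
    (hg : ∀ i, (∀ j, e j ≠ i) → g i = 0) : ∑ i, g i = ∑ j, g (e j) := by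
  rw [show (Finset.univ : Finset ι).sum (fun j => g (e j))
      = ∑ i ∈ Finset.univ.image e, g i from
    (Finset.sum_image (fun a _ b _ h => e.injective h)).symm]
  refine (Finset.sum_subset (Finset.subset_univ _) ?_).symm
  intro i _ hni
  refine hg i fun j hj => hni ?_
  rw [← hj]; exact Finset.mem_image_of_mem e (Finset.mem_univ j)

lemma isCompact_convexHull_of_isCompact {E : Type*} [NormedAddCommGroup E] [NormedSpace ℝ E]
    [FiniteDimensional ℝ E] {s : Set E} (hs : IsCompact s) :
    IsCompact (convexHull ℝ s) := by
  classical
  rcases s.eq_empty_or_nonempty with rfl | ⟨y₀, hy₀⟩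
  · simp
  set d := finrank ℝ E + 1 with hd
  have hcont : Continuous fun p : (Fin d → ℝ) × (Fin d → E) => ∑ i, p.1 i • p.2 i := by
    apply continuous_finset_sum
    intro i _
    exact ((continuous_apply i).comp continuous_fst).smul
      ((continuous_apply i).comp continuous_snd)
  have hK : IsCompact ((stdSimplex ℝ (Fin d)) ×ˢ Set.univ.pi fun _ : Fin d => s) :=
    (isCompact_stdSimplex (𝕜 := ℝ) (ι := Fin d)).prod (isCompact_univ_pi fun _ => hs)
  have himg : (fun p : (Fin d → ℝ) × (Fin d → E) => ∑ i, p.1 i • p.2 i) ''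
      ((stdSimplex ℝ (Fin d)) ×ˢ Set.univ.pi fun _ : Fin d => s) = convexHull ℝ s := by
    apply Set.Subset.antisymm
    · rintro x ⟨⟨w, z⟩, ⟨hw, hz⟩, rfl⟩
      exact (convex_convexHull ℝ s).sum_mem (fun i _ => hw.1 i) hw.2
        (fun i _ => subset_convexHull ℝ s (hz i (Set.mem_univ i)))
    · intro x hx
      obtain ⟨ι, hft, z, w, hzs, hai, hw0, hw1, hsum⟩ :=
        eq_pos_convex_span_of_mem_convexHull hx
      have hcard : Fintype.card ι ≤ d := by
        refine le_trans hai.card_le_finrank_succ ?_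
        have := Submodule.finrank_le (vectorSpan ℝ (Set.range z))
        omega
      obtain ⟨e⟩ : Nonempty (ι ↪ Fin d) := by
        apply Function.Embedding.nonempty_of_card_le
        rwa [Fintype.card_fin]
      set W : Fin d → ℝ := fun i => if h : ∃ j, e j = i then w h.choose else 0 with hWdef
      set Z : Fin d → E := fun i => if h : ∃ j, e j = i then z h.choose else y₀ with hZdef
      have hWe : ∀ j, W (e j) = w j := by
        intro j
        have h : ∃ j', e j' = e j := ⟨j, rfl⟩
        simp only [hWdef, dif_pos h]
        rw [e.injective h.choose_spec]
      have hZe : ∀ j, Z (e j) = z j := by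
        intro j
        have h : ∃ j', e j' = e j := ⟨j, rfl⟩
        simp only [hZdef, dif_pos h]
        rw [e.injective h.choose_spec]
      have hWoff : ∀ i, (∀ j, e j ≠ i) → W i = 0 := by
        intro i hi
        exact dif_neg (fun h => hi h.choose h.choose_spec)
      refine ⟨(W, Z), ⟨⟨fun i => ?_, ?_⟩, fun i _ => ?_⟩, ?_⟩
      · simp only [hWdef]
        split_ifs with h
        · exact (hw0 _).le
        · rfl
      · rw [sum_eq_sum_embedding e W hWoff]
        simp only [hWe]
        exact hw1
      · simp only [hZdef]
        split_ifs with h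
        · exact hzs ⟨h.choose, rfl⟩
        · exact hy₀
      · show ∑ i, W i • Z i = x
        rw [sum_eq_sum_embedding e (fun i => W i • Z i)
          (fun i hi => by beta_reduce; rw [hWoff i hi, zero_smul])]
        simp only [hWe, hZe]
        exact hsum
  rw [← himg]
  exact hK.image hcont

/-- A compact set in a nontrivial normed space is contained in the convex hull
of its frontier. -/
lemma compact_subset_convexHull_frontier {E : Type*} [NormedAddCommGroup E]
    [NormedSpace ℝ E] [Nontrivial E] {Y : Set E} (hYc : IsCompact Y) :
    Y ⊆ convexHull ℝ (frontier Y) := by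
  intro x hx
  obtain ⟨e, he⟩ := exists_ne (0 : E)
  set S : Set ℝ := {t : ℝ | x + t • e ∈ Y} with hS
  have hcont : Continuous fun t : ℝ => x + t • e := by continuity
  have hSclosed : IsClosed S := hYc.isClosed.preimage hcont
  have hSbdd : Bornology.IsBounded S := by
    obtain ⟨C, hC⟩ := hYc.isBounded.subset_closedBall 0
    have : S ⊆ Set.Icc (-((C + ‖x‖) / ‖e‖)) ((C + ‖x‖) / ‖e‖) := by
      intro t ht
      have h1 : ‖x + t • e‖ ≤ C := by simpa [dist_eq_norm] using hC ht
      have h2 : ‖t • e‖ ≤ C + ‖x‖ := by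
        have h3 : t • e = (x + t • e) - x := by abel
        rw [h3]
        calc ‖(x + t • e) - x‖ ≤ ‖x + t • e‖ + ‖x‖ := norm_sub_le _ _
          _ ≤ C + ‖x‖ := by linarith
      rw [norm_smul] at h2
      have he' : 0 < ‖e‖ := norm_pos_iff.2 he
      have : |t| ≤ (C + ‖x‖) / ‖e‖ := by
        rw [le_div_iff₀ he']; simpa [Real.norm_eq_abs] using h2
      exact abs_le.1 this
    exact (Metric.isBounded_Icc _ _).subset this
  have hScpt : IsCompact S := Metric.isCompact_of_isClosed_isBounded hSclosed hSbdd
  have h0S : (0 : ℝ) ∈ S := by simpa [hS] using hx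
  have hSne : S.Nonempty := ⟨0, h0S⟩
  have ht1 := hScpt.sSup_mem hSne
  have ht2 := hScpt.sInf_mem hSne
  set t1 := sSup S
  set t2 := sInf S
  have hle2 : t2 ≤ 0 := csInf_le hScpt.isBounded.bddBelow h0S
  have hle1 : 0 ≤ t1 := le_csSup hScpt.isBounded.bddAbove h0S
  have hfr : ∀ t ∈ S, (∀ s ∈ S, s ≤ t) ∨ (∀ s ∈ S, t ≤ s) → x + t • e ∈ frontier Y := by
    intro t htS hmax
    rw [hYc.isClosed.frontier_eq]
    refine ⟨htS, fun hint => ?_⟩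
    obtain ⟨ε, hε, hball⟩ := Metric.isOpen_iff.1 isOpen_interior _ hint
    have he' : 0 < ‖e‖ := norm_pos_iff.2 he
    set δ := ε / (2 * ‖e‖)
    have hδ : 0 < δ := by positivity
    have hmem : ∀ s : ℝ, |s - t| ≤ δ → s ∈ S := by
      intro s hs
      have : x + s • e ∈ Metric.ball (x + t • e) ε := by
        rw [Metric.mem_ball, dist_eq_norm]
        have : x + s • e - (x + t • e) = (s - t) • e := by module
        rw [this, norm_smul, Real.norm_eq_abs]
        have hde : δ * ‖e‖ = ε / 2 := by simp only [δ]; field_simp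
        calc |s - t| * ‖e‖ ≤ δ * ‖e‖ := by nlinarith [he'.le]
          _ < ε := by rw [hde]; linarith
      show x + s • e ∈ Y
      exact interior_subset (hball this)
    rcases hmax with hmax | hmin
    · have := hmax (t + δ) (hmem _ (by rw [show t + δ - t = δ by ring, abs_of_nonneg hδ.le]))
      linarith
    · have := hmin (t - δ) (hmem _ (by rw [show t - δ - t = -δ by ring, abs_neg, abs_of_nonneg hδ.le]))
      linarith
  have hx1 : x + t1 • e ∈ frontier Y :=
    hfr t1 ht1 (Or.inl fun s hs => le_csSup hScpt.isBounded.bddAbove hs)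
  have hx2 : x + t2 • e ∈ frontier Y :=
    hfr t2 ht2 (Or.inr fun s hs => csInf_le hScpt.isBounded.bddBelow hs)
  rcases eq_or_lt_of_le (hle2.trans hle1) with heq | hlt
  · -- t2 = t1 ⇒ t1 = 0
    have h1 : t1 = 0 := by linarith
    have := subset_convexHull ℝ (frontier Y) hx1
    rwa [h1, zero_smul, add_zero] at this
  · have h : t1 - t2 ≠ 0 := by intro hc; rw [sub_eq_zero] at hc; linarith
    have hab : t1 / (t1 - t2) + -t2 / (t1 - t2) = 1 := by field_simp; ring
    have hc := (convex_convexHull ℝ (frontier Y)) (subset_convexHull ℝ _ hx2)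
      (subset_convexHull ℝ _ hx1) (a := t1 / (t1 - t2)) (b := -t2 / (t1 - t2))
      (div_nonneg hle1 (by linarith)) (div_nonneg (by linarith) (by linarith)) hab
    have : (t1 / (t1 - t2)) • (x + t2 • e) + (-t2 / (t1 - t2)) • (x + t1 • e) = x := by
      rw [smul_add, smul_add, smul_smul, smul_smul]
      rw [show t1 / (t1 - t2) * t2 = -(-t2 / (t1 - t2) * t1) by field_simp]
      rw [show (t1 / (t1 - t2)) • x + -(-t2 / (t1 - t2) * t1) • e +
          ((-t2 / (t1 - t2)) • x + (-t2 / (t1 - t2) * t1) • e)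
          = ((t1 / (t1 - t2)) + (-t2 / (t1 - t2))) • x by module]
      rw [hab, one_smul]
    rwa [this] at hc

/-- If a closed ball of radius `R > 0` rolls freely inside a nonempty compact set
`Y ⊆ ℝ^n`, then a closed ball of radius `R` rolls freely inside `convexHull ℝ Y`. -/
theorem stmt4 (n : ℕ) (R : ℝ) (hR : 0 < R) (Y : Set (EuclideanSpace ℝ (Fin n)))
    (hYne : Y.Nonempty) (hYc : IsCompact Y)
    (hroll : ∀ y ∈ frontier Y, ∃ a, y ∈ closedBall a R ∧ closedBall a R ⊆ Y) :
    ∀ y ∈ frontier (convexHull ℝ Y), ∃ b,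
      y ∈ closedBall b R ∧ closedBall b R ⊆ convexHull ℝ Y := by
  intro y hy
  rcases Nat.eq_zero_or_pos n with hn | hn
  · exfalso
    haveI : Subsingleton (EuclideanSpace ℝ (Fin n)) := by
      subst hn; infer_instance
    have hYu : Y = Set.univ :=
      Set.eq_univ_of_forall fun x => (Subsingleton.elim x hYne.choose) ▸ hYne.choose_spec
    rw [hYu, convexHull_univ, frontier_univ] at hy
    exact hy
  · haveI : Nontrivial (EuclideanSpace ℝ (Fin n)) := by
      apply Module.nontrivial_of_finrank_pos (R := ℝ)
      rw [finrank_euclideanSpace_fin]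
      exact hn
    have hKcpt : IsCompact (convexHull ℝ Y) := isCompact_convexHull_of_isCompact hYc
    have hyK : y ∈ convexHull ℝ Y := by
      have := frontier_subset_closure hy
      rwa [hKcpt.isClosed.closure_eq] at this
    have hy' : y ∈ convexHull ℝ (frontier Y) :=
      convexHull_min (compact_subset_convexHull_frontier hYc)
        (convex_convexHull ℝ (frontier Y)) hyK
    rw [convexHull_eq] at hy'
    obtain ⟨ι, t, w, z, hw0, hw1, hz, hcm⟩ := hy'
    have h2 : ∀ i : ι, ∃ a, i ∈ t → z i ∈ closedBall a R ∧ closedBall a R ⊆ Y := by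
      intro i
      by_cases hi : i ∈ t
      · obtain ⟨a, h⟩ := hroll _ (hz i hi); exact ⟨a, fun _ => h⟩
      · exact ⟨0, fun h => absurd h hi⟩
    choose a ha using h2
    refine ⟨∑ i ∈ t, w i • a i, ?_, ?_⟩
    · rw [mem_closedBall, dist_eq_norm]
      have hyeq : y = ∑ i ∈ t, w i • z i := by
        rw [← hcm, Finset.centerMass_eq_of_sum_1 _ _ hw1]
      have hdiff : y - ∑ i ∈ t, w i • a i = ∑ i ∈ t, w i • (z i - a i) := by
        rw [hyeq, ← Finset.sum_sub_distrib]
        exact Finset.sum_congr rfl fun i _ => (smul_sub _ _ _).symm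
      rw [hdiff]
      calc ‖∑ i ∈ t, w i • (z i - a i)‖ ≤ ∑ i ∈ t, ‖w i • (z i - a i)‖ :=
            norm_sum_le _ _
        _ ≤ ∑ i ∈ t, w i * R := by
            refine Finset.sum_le_sum fun i hi => ?_
            rw [norm_smul, Real.norm_eq_abs, abs_of_nonneg (hw0 i hi)]
            refine mul_le_mul_of_nonneg_left ?_ (hw0 i hi)
            have := (ha i hi).1
            rwa [mem_closedBall, dist_eq_norm] at this
        _ = R := by rw [← Finset.sum_mul, hw1, one_mul]
    · intro p hp
      rw [mem_closedBall, dist_eq_norm] at hp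
      have hrep : p = ∑ i ∈ t, w i • (a i + (p - ∑ i ∈ t, w i • a i)) := by
        have : ∑ i ∈ t, w i • (a i + (p - ∑ i ∈ t, w i • a i))
            = (∑ i ∈ t, w i • a i) + (∑ i ∈ t, w i) • (p - ∑ i ∈ t, w i • a i) := by
          rw [Finset.sum_smul, ← Finset.sum_add_distrib]
          exact Finset.sum_congr rfl fun i _ => smul_add _ _ _
        rw [this, hw1, one_smul]; abel
      rw [hrep]
      refine (convex_convexHull ℝ Y).sum_mem hw0 hw1 fun i hi => ?_
      refine subset_convexHull ℝ Y ((ha i hi).2 ?_)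
      rw [mem_closedBall, dist_eq_norm]
      simpa using hp
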